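/- Assume (A1), (A2) and (A3). Then for every i ∈ Ψ there exists an integer k₀ such that for every n ≥ k₀ there exists σ ∈ 𝒮_n(i) with I_{1,σ} < (χ_i/χ_{i⁺})·I_{2,σ}. -/

import Mathlib

open scoped Classical ENNReal
open Filter MeasureTheory

noncomputable section

namespace MTM

/-- the edge relation of the directed graph `𝒢`: `(i,j) ∈ G₂ ↔ p i j > 0`. -/
def edge (p : ℕ → ℕ → ℝ) (i j : ℕ) : Prop := 0 < p i j

/-- product of transition weights along a word. -/
def pword (p : ℕ → ℕ → ℝ) : List ℕ → ℝ
  | [] => 1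
  | [_] => 1
  | a :: b :: t => p a b * pword p (b :: t)

/-- product of contraction ratios along a word. -/
def sword (sr : ℕ → ℕ → ℝ) : List ℕ → ℝ
  | [] => 1
  | [_] => 1
  | a :: b :: t => sr a b * sword sr (b :: t)

/-- `𝒯(σ)`: all lifts of a word, each letter `i` may be replaced by `i + N`. -/
def lifts (N : ℕ) : List ℕ → Finset (List ℕ)
  | [] => {[]}
  | i :: t => (lifts N t).biUnion fun l => {i :: l, (i + N) :: l}

/-- `Γ(σ) = G_n ∩ 𝒯(σ)`. -/
def Gam (p : ℕ → ℕ → ℝ) (N : ℕ) (σ : List ℕ) : Finset (List ℕ) :=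
  (lifts N σ).filter fun τ => τ.Chain' (edge p)

/-- words over the alphabet `Ψ = {1,…,N}`. -/
def isPsiWord (N : ℕ) (σ : List ℕ) : Prop :=
  σ ≠ [] ∧ ∀ x ∈ σ, x ∈ Finset.Icc 1 N

/-- `σ ∈ 𝒮_*`: a `Ψ`-word having at least one admissible lift. -/
def isSword (p : ℕ → ℕ → ℝ) (N : ℕ) (σ : List ℕ) : Prop :=
  isPsiWord N σ ∧ (Gam p N σ).Nonempty

/-- `σ ∈ G_*`: admissible words over `Ω = {1,…,2N}`. -/
def isGword (p : ℕ → ℕ → ℝ) (N : ℕ) (σ : List ℕ) : Prop :=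
  σ ≠ [] ∧ (∀ x ∈ σ, x ∈ Finset.Icc 1 (2 * N)) ∧ σ.Chain' (edge p)

/-- `σ ∈ H₁^*`: admissible words with all letters in `Ψ`. -/
def isH1word (p : ℕ → ℕ → ℝ) (N : ℕ) (σ : List ℕ) : Prop :=
  σ ≠ [] ∧ (∀ x ∈ σ, x ∈ Finset.Icc 1 N) ∧ σ.Chain' (edge p)

/-- `σ ∈ H₂^*`: admissible words with all letters in `Υ = {N+1,…,2N}`. -/
def isH2word (p : ℕ → ℕ → ℝ) (N : ℕ) (σ : List ℕ) : Prop :=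
  σ ≠ [] ∧ (∀ x ∈ σ, x ∈ Finset.Icc (N + 1) (2 * N)) ∧ σ.Chain' (edge p)

/-- `μ(J_σ) = Σ_{σ̃ ∈ Γ(σ)} χ_{σ̃₁} p_{σ̃}`. -/
def muJ (p : ℕ → ℕ → ℝ) (χ : ℕ → ℝ) (N : ℕ) (σ : List ℕ) : ℝ :=
  ∑ τ ∈ Gam p N σ, χ (τ.headD 0) * pword p τ

/-- `ℰ_r(σ) = μ(J_σ) s_σ^r`, with `ℰ_r(θ) = 1` for the empty word. -/
def Er (p : ℕ → ℕ → ℝ) (χ : ℕ → ℝ) (sr : ℕ → ℕ → ℝ) (N : ℕ) (r : ℝ) (σ : List ℕ) : ℝ :=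
  if σ = [] then 1 else muJ p χ N σ * sword sr σ ^ r

/-- `I_{1,σ}` resp. `I_{2,σ}`: the part of `μ(J_σ)` coming from lifts ending with `i`
(resp. with `i⁺`, when applied with `i + N`). -/
def Ipart (p : ℕ → ℕ → ℝ) (χ : ℕ → ℝ) (N : ℕ) (i : ℕ) (σ : List ℕ) : ℝ :=
  ∑ τ ∈ (Gam p N σ).filter (fun τ => τ.getLastD 0 = i), χ (τ.headD 0) * pword p τ

/-- all words of a given length over a finite alphabet. -/
def wordsOfLen (S : Finset ℕ) : ℕ → Finset (List ℕ)
  | 0 => {[]}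
  | n + 1 => (wordsOfLen S n).biUnion fun l => S.image fun a => a :: l

/-- `𝒮_n` as a finite set of words. -/
def Sn (p : ℕ → ℕ → ℝ) (N n : ℕ) : Finset (List ℕ) :=
  (wordsOfLen (Finset.Icc 1 N) n).filter (isSword p N)

/-- irreducibility of the sub-matrix of `p` indexed by `S`: the corresponding directed
graph is strongly connected. -/
def irreducibleOn (p : ℕ → ℕ → ℝ) (S : Finset ℕ) : Prop :=
  ∀ i ∈ S, ∀ j ∈ S, ∃ c : List ℕ, (∀ x ∈ c, x ∈ S) ∧ List.Chain (edge p) i (c ++ [j])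

/-- Assumption (A1): `P₁, P₂` irreducible and `P₄ = 0`. -/
def A1 (p : ℕ → ℕ → ℝ) (N : ℕ) : Prop :=
  irreducibleOn p (Finset.Icc 1 N) ∧
    irreducibleOn (fun a b => p (a + N) (b + N)) (Finset.Icc 1 N) ∧
    ∀ i ∈ Finset.Icc 1 N, ∀ j ∈ Finset.Icc 1 N, p (i + N) j = 0

/-- Assumption (A2). -/
def A2 (p : ℕ → ℕ → ℝ) (N : ℕ) : Prop :=
  ∀ i ∈ Finset.Icc 1 N,
    2 ≤ ((Finset.Icc 1 N).filter fun j => 0 < p i j).card ∧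
      2 ≤ ((Finset.Icc 1 N).filter fun j => 0 < p (i + N) (j + N)).card

/-- Assumption (A3): `ℳ_{i,j} = ∅` or `ℳ_{i,j} = {(i,j),(i,j⁺),(i⁺,j⁺)}`. -/
def A3 (p : ℕ → ℕ → ℝ) (N : ℕ) : Prop :=
  ∀ i ∈ Finset.Icc 1 N, ∀ j ∈ Finset.Icc 1 N,
    (p i j = 0 ∧ p i (j + N) = 0 ∧ p (i + N) j = 0 ∧ p (i + N) (j + N) = 0) ∨
      (0 < p i j ∧ 0 < p i (j + N) ∧ p (i + N) j = 0 ∧ 0 < p (i + N) (j + N))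

/-- Assumption (A4): `ℳ_{i,j} = ∅` or `ℳ_{i,j} = 𝒩_{i,j}`. -/
def A4 (p : ℕ → ℕ → ℝ) (N : ℕ) : Prop :=
  ∀ i ∈ Finset.Icc 1 N, ∀ j ∈ Finset.Icc 1 N,
    (p i j = 0 ∧ p i (j + N) = 0 ∧ p (i + N) j = 0 ∧ p (i + N) (j + N) = 0) ∨
      (0 < p i j ∧ 0 < p i (j + N) ∧ 0 < p (i + N) j ∧ 0 < p (i + N) (j + N))

/-- Assumption (A5): `P₁` is irreducible. -/
def A5 (p : ℕ → ℕ → ℝ) (N : ℕ) : Prop := irreducibleOn p (Finset.Icc 1 N)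

/-- `T_σ = T_{σ₁σ₂} ∘ ⋯ ∘ T_{σ_{n-1}σ_n}` (identity for words of length `≤ 1`). -/
def Tword {E : Type*} (T : ℕ → ℕ → E → E) : List ℕ → E → E
  | [], x => x
  | [_], x => x
  | a :: b :: t, x => T a b (Tword T (b :: t) x)

/-- the cylinder set `J_σ = T_σ (J_{σ_n})`. -/
def Jword {E : Type*} (T : ℕ → ℕ → E → E) (J : ℕ → Set E) (σ : List ℕ) : Set E :=
  Tword T σ '' J (σ.getLastD 0)

/-- the Mauldin–Williams fractal `K = ⋂_k ⋃_{σ ∈ G_k} J_σ`. -/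
def attractor {E : Type*} (p : ℕ → ℕ → ℝ) (N : ℕ) (T : ℕ → ℕ → E → E) (J : ℕ → Set E) :
    Set E :=
  ⋂ n : ℕ, ⋃ σ ∈ {σ : List ℕ | isGword p N σ ∧ σ.length = n + 1}, Jword T J σ

/-- `μ` is reducible: `μ = ν₁ ∘ π₁⁻¹` for the Markov-type measure `ν₁` associated with some
`N × N` row-stochastic matrix and positive probability vector; equivalently, the cylinder
values of `μ` are of Markov type. -/
def reducible {E : Type*} [MeasurableSpace E] (p : ℕ → ℕ → ℝ) (N : ℕ)
    (T : ℕ → ℕ → E → E) (J : ℕ → Set E) (μ : Measure E) : Prop :=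
  ∃ (pt : ℕ → ℕ → ℝ) (χt : ℕ → ℝ),
    (∀ i ∈ Finset.Icc 1 N, ∀ j ∈ Finset.Icc 1 N, 0 ≤ pt i j) ∧
      (∀ i ∈ Finset.Icc 1 N, ∑ j ∈ Finset.Icc 1 N, pt i j = 1) ∧
      (∀ i ∈ Finset.Icc 1 N, 0 < χt i) ∧
      (∑ i ∈ Finset.Icc 1 N, χt i = 1) ∧
      ∀ σ : List ℕ, isSword p N σ →
        μ (Jword T J σ) = ENNReal.ofReal (χt (σ.headD 0) * pword pt σ)

/-- `e^r_{k,r}(μ)`: the `k`-th quantization error of order `r`, to the `r`-th power. -/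
def quantErr {E : Type*} [PseudoMetricSpace E] [MeasurableSpace E] (r : ℝ) (μ : Measure E)
    (k : ℕ) : ℝ :=
  sInf ((fun α : Set E => ∫ x, Metric.infDist x α ^ r ∂μ) ''
    {α : Set E | α.Nonempty ∧ α.Finite ∧ α.ncard ≤ k})

/-- the upper quantization coefficient `Q̄_r^s(μ) = limsup_k k^{r/s} e^r_{k,r}(μ)`. -/
def upperQC {E : Type*} [PseudoMetricSpace E] [MeasurableSpace E] (r s : ℝ)
    (μ : Measure E) : ℝ≥0∞ :=
  limsup (fun k : ℕ => ENNReal.ofReal ((k : ℝ) ^ (r / s) * quantErr r μ k)) atTop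

/-- the lower quantization coefficient `Q̲_r^s(μ)`. -/
def lowerQC {E : Type*} [PseudoMetricSpace E] [MeasurableSpace E] (r s : ℝ)
    (μ : Measure E) : ℝ≥0∞ :=
  liminf (fun k : ℕ => ENNReal.ofReal ((k : ℝ) ^ (r / s) * quantErr r μ k)) atTop

/-- the upper quantization dimension `D̄_r(μ) = limsup_k log k / (-log e_{k,r}(μ))`. -/
def upperQD {E : Type*} [PseudoMetricSpace E] [MeasurableSpace E] (r : ℝ)
    (μ : Measure E) : ℝ :=
  limsup (fun k : ℕ => Real.log k / (-Real.log (quantErr r μ k ^ (1 / r)))) atTop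

/-- the lower quantization dimension `D̲_r(μ)`. -/
def lowerQD {E : Type*} [PseudoMetricSpace E] [MeasurableSpace E] (r : ℝ)
    (μ : Measure E) : ℝ :=
  liminf (fun k : ℕ => Real.log k / (-Real.log (quantErr r μ k ^ (1 / r)))) atTop

/-- spectral radius of a real matrix: the largest modulus of a complex eigenvalue. -/
def specRad {n : Type*} [Fintype n] [DecidableEq n] (M : Matrix n n ℝ) : ℝ :=
  sSup (norm '' spectrum ℂ (M.map (algebraMap ℝ ℂ)))

/-- `A₁(s) = ((p_{i,j} s_{i,j}^r)^s)_{i,j=1}^N`. -/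
def matA1 (p sr : ℕ → ℕ → ℝ) (N : ℕ) (r s : ℝ) : Matrix (Fin N) (Fin N) ℝ :=
  Matrix.of fun i j => (p (i.1 + 1) (j.1 + 1) * sr (i.1 + 1) (j.1 + 1) ^ r) ^ s

/-- `A₂(s) = ((p_{i⁺,j⁺} s_{i⁺,j⁺}^r)^s)_{i,j=1}^N`. -/
def matA2 (p sr : ℕ → ℕ → ℝ) (N : ℕ) (r s : ℝ) : Matrix (Fin N) (Fin N) ℝ :=
  Matrix.of fun i j => (p (i.1 + 1 + N) (j.1 + 1 + N) * sr (i.1 + 1 + N) (j.1 + 1 + N) ^ r) ^ s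

/-- `A₃(s) = ((p_{i,j⁺} s_{i,j⁺}^r)^s)_{i,j=1}^N`. -/
def matA3 (p sr : ℕ → ℕ → ℝ) (N : ℕ) (r s : ℝ) : Matrix (Fin N) (Fin N) ℝ :=
  Matrix.of fun i j => (p (i.1 + 1) (j.1 + 1 + N) * sr (i.1 + 1) (j.1 + 1 + N) ^ r) ^ s

/-- `A₄(s) = ((p_{i⁺,j} s_{i⁺,j}^r)^s)_{i,j=1}^N`. -/
def matA4 (p sr : ℕ → ℕ → ℝ) (N : ℕ) (r s : ℝ) : Matrix (Fin N) (Fin N) ℝ :=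
  Matrix.of fun i j => (p (i.1 + 1 + N) (j.1 + 1) * sr (i.1 + 1 + N) (j.1 + 1) ^ r) ^ s

/-- the block matrix `A(s) = [[A₁(s), A₃(s)], [A₄(s), A₂(s)]]`. -/
def matA (p sr : ℕ → ℕ → ℝ) (N : ℕ) (r s : ℝ) :
    Matrix (Fin N ⊕ Fin N) (Fin N ⊕ Fin N) ℝ :=
  Matrix.fromBlocks (matA1 p sr N r s) (matA3 p sr N r s) (matA4 p sr N r s) (matA2 p sr N r s)

/-- `p̲ = min_{(i,j) ∈ G₂} p_{i,j}`. -/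
def pMin (p : ℕ → ℕ → ℝ) (N : ℕ) : ℝ :=
  sInf {x | ∃ i ∈ Finset.Icc 1 (2 * N), ∃ j ∈ Finset.Icc 1 (2 * N), 0 < p i j ∧ x = p i j}

/-- `p̄ = max_{(i,j) ∈ G₂} p_{i,j}`. -/
def pMax (p : ℕ → ℕ → ℝ) (N : ℕ) : ℝ :=
  sSup {x | ∃ i ∈ Finset.Icc 1 (2 * N), ∃ j ∈ Finset.Icc 1 (2 * N), 0 < p i j ∧ x = p i j}

/-- `s̲ = min_{(i,j) ∈ 𝒮₂} s_{i,j}`. -/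
def sMin (p sr : ℕ → ℕ → ℝ) (N : ℕ) : ℝ :=
  sInf {x | ∃ i ∈ Finset.Icc 1 N, ∃ j ∈ Finset.Icc 1 N, isSword p N [i, j] ∧ x = sr i j}

/-- `s̄ = max_{(i,j) ∈ 𝒮₂} s_{i,j}`. -/
def sMax (p sr : ℕ → ℕ → ℝ) (N : ℕ) : ℝ :=
  sSup {x | ∃ i ∈ Finset.Icc 1 N, ∃ j ∈ Finset.Icc 1 N, isSword p N [i, j] ∧ x = sr i j}

/-- `χ̲ = min_{1 ≤ i ≤ 2N} χ_i`. -/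
def chiMin (χ : ℕ → ℝ) (N : ℕ) : ℝ := sInf {x | ∃ i ∈ Finset.Icc 1 (2 * N), x = χ i}

/-- `χ̄ = max_{1 ≤ i ≤ 2N} χ_i`. -/
def chiMax (χ : ℕ → ℝ) (N : ℕ) : ℝ := sSup {x | ∃ i ∈ Finset.Icc 1 (2 * N), x = χ i}

/-- `t` satisfies the defining property of `t_r`:
`(1/n) log Σ_{σ ∈ 𝒮_n} ℰ_r(σ)^{t/(t+r)} → 0`. -/
def trCond (p : ℕ → ℕ → ℝ) (χ : ℕ → ℝ) (sr : ℕ → ℕ → ℝ) (N : ℕ) (r t : ℝ) : Prop :=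
  0 < t ∧
    Tendsto (fun n : ℕ => (n : ℝ)⁻¹ *
      Real.log (∑ σ ∈ Sn p N n, Er p χ sr N r σ ^ (t / (t + r)))) atTop (nhds 0)

/-- the initial word of length `n` of an infinite sequence. -/
def seqTake (x : ℕ → ℕ) (n : ℕ) : List ℕ := (List.range n).map x

/-- `Γ` is a finite maximal antichain among the words satisfying `W`, with respect to the
infinite sequences satisfying `Wseq`. -/
def isMaxAntichain (W : List ℕ → Prop) (Wseq : (ℕ → ℕ) → Prop) (Γ : Finset (List ℕ)) : Prop :=
  (∀ σ ∈ Γ, W σ) ∧ (∀ σ ∈ Γ, ∀ τ ∈ Γ, σ ≠ τ → ¬σ <+: τ) ∧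
    ∀ x : ℕ → ℕ, Wseq x → ∃ n : ℕ, 1 ≤ n ∧ seqTake x n ∈ Γ

/-- infinite admissible sequences with letters in `Ψ`. -/
def isH1seq (p : ℕ → ℕ → ℝ) (N : ℕ) (x : ℕ → ℕ) : Prop :=
  (∀ n, x n ∈ Finset.Icc 1 N) ∧ ∀ n, 0 < p (x n) (x (n + 1))

/-- infinite admissible sequences with letters in `Υ`. -/
def isH2seq (p : ℕ → ℕ → ℝ) (N : ℕ) (x : ℕ → ℕ) : Prop :=
  (∀ n, x n ∈ Finset.Icc (N + 1) (2 * N)) ∧ ∀ n, 0 < p (x n) (x (n + 1))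

/-- minimal length of a word in `Γ`. -/
def minLen (Γ : Finset (List ℕ)) : ℕ := sInf {n | ∃ σ ∈ Γ, σ.length = n}

/-- maximal length of a word in `Γ`. -/
def maxLen (Γ : Finset (List ℕ)) : ℕ := sSup {n | ∃ σ ∈ Γ, σ.length = n}

/-- `Λ_{k,r} = {σ ∈ 𝒮^* : ℰ_r(σ) < c₁^k ≤ ℰ_r(σ^♭)}`. -/
def LamSet (p : ℕ → ℕ → ℝ) (χ : ℕ → ℝ) (sr : ℕ → ℕ → ℝ) (N : ℕ) (r c1 : ℝ) (k : ℕ) :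
    Set (List ℕ) :=
  {σ | isSword p N σ ∧ Er p χ sr N r σ < c1 ^ k ∧ c1 ^ k ≤ Er p χ sr N r σ.dropLast}

/-- `ℒ(σ) = {σ, σ⁺} ∪ {σ|_h ∗ (σ_{h+1}⁺, …, σ_n⁺) : 1 ≤ h ≤ n − 1}`. -/
def Lset (N : ℕ) (σ : List ℕ) : Finset (List ℕ) :=
  (Finset.range (σ.length + 1)).image fun h =>
    σ.take h ++ (σ.drop h).map (fun x => x + N)

/-! ### Auxiliary lemmas for Lemma 2.5 -/

section Aux25

open List

variable {p : ℕ → ℕ → ℝ} {N : ℕ}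

/-- the shifted ("upper level") transition matrix. -/
def qm (p : ℕ → ℕ → ℝ) (N : ℕ) : ℕ → ℕ → ℝ := fun a b => p (a + N) (b + N)

lemma pword_nil : pword p [] = 1 := rfl

lemma pword_single (a : ℕ) : pword p [a] = 1 := rfl

lemma pword_cons₂ (a b : ℕ) (t : List ℕ) :
    pword p (a :: b :: t) = p a b * pword p (b :: t) := rfl

lemma pword_nonneg (hp0 : ∀ i j, 0 ≤ p i j) : ∀ l : List ℕ, 0 ≤ pword p l
  | [] => by rw [pword_nil]; norm_num
  | [a] => by rw [pword_single]; norm_num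
  | a :: b :: t => by
      rw [pword_cons₂]
      exact mul_nonneg (hp0 a b) (pword_nonneg hp0 (b :: t))

lemma pword_pos (hp0 : ∀ i j, 0 ≤ p i j) :
    ∀ l : List ℕ, l.Chain' (edge p) → 0 < pword p l
  | [], _ => by rw [pword_nil]; norm_num
  | [a], _ => by rw [pword_single]; norm_num
  | a :: b :: t, h => by
      rw [pword_cons₂]
      rcases List.isChain_cons_cons.1 h with ⟨h1, h2⟩
      exact mul_pos h1 (pword_pos hp0 (b :: t) h2)

lemma pword_split : ∀ (x : List ℕ) (b : ℕ) (y : List ℕ),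
    pword p (x ++ b :: y) = pword p (x ++ [b]) * pword p (b :: y)
  | [], b, y => by simp [pword_single]
  | [a], b, y => by simp [pword_cons₂, pword_single]
  | a :: c :: t, b, y => by
      have ih := pword_split (c :: t) b y
      simp only [List.cons_append] at ih ⊢
      rw [pword_cons₂, pword_cons₂, ih]
      ring

lemma pword_map : ∀ l : List ℕ,
    pword p (l.map (· + N)) = pword (qm p N) l
  | [] => rfl
  | [a] => rfl
  | a :: b :: t => by
      have ih := pword_map (b :: t)
      simp only [List.map_cons] at ih ⊢
      rw [pword_cons₂, pword_cons₂, ih]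
      rfl

lemma chain'_glue {α : Type*} {R : α → α → Prop} {l₁ l₂ : List α} {v : α}
    (h₁ : l₁.Chain' R) (hv : l₁.getLast? = some v) (h₂ : (v :: l₂).Chain' R) :
    (l₁ ++ l₂).Chain' R := by
  rcases List.isChain_cons.1 h₂ with ⟨hlink, h₂'⟩
  refine List.isChain_append.2 ⟨h₁, h₂', ?_⟩
  intro x hx y hy
  rw [hv, Option.mem_some_iff] at hx
  subst hx
  exact hlink y hy

lemma chain'_imp_mem {R S : ℕ → ℕ → Prop} {P : ℕ → Prop}
    (h : ∀ a b, P a → P b → R a b → S a b) :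
    ∀ l : List ℕ, (∀ x ∈ l, P x) → l.Chain' R → l.Chain' S
  | [], _, _ => List.isChain_nil
  | [a], _, _ => List.isChain_singleton a
  | a :: b :: t, hm, hc => by
      rcases List.isChain_cons_cons.1 hc with ⟨h1, h2⟩
      refine List.isChain_cons_cons.2 ⟨h a b (hm a (by simp)) (hm b (by simp)) h1, ?_⟩
      exact chain'_imp_mem h (b :: t) (fun x hx => hm x (List.mem_cons_of_mem _ hx)) h2

lemma mem_lifts_cons {τ : List ℕ} {i : ℕ} {t : List ℕ} :
    τ ∈ lifts N (i :: t) ↔ ∃ l ∈ lifts N t, τ = i :: l ∨ τ = (i + N) :: l := by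
  simp [lifts, Finset.mem_biUnion, Finset.mem_insert, Finset.mem_singleton]

lemma mem_lifts_of_split : ∀ (x y : List ℕ),
    (x ++ y.map (· + N)) ∈ lifts N (x ++ y)
  | [], y => by
      induction y with
      | nil => simp [lifts]
      | cons a t ih =>
          simp only [List.nil_append] at ih ⊢
          exact mem_lifts_cons.2 ⟨t.map (· + N), ih, Or.inr rfl⟩
  | a :: x, y => by
      have ih := mem_lifts_of_split x y
      simp only [List.cons_append]
      exact mem_lifts_cons.2 ⟨x ++ y.map (· + N), ih, Or.inl rfl⟩

lemma lifts_self (σ : List ℕ) : σ ∈ lifts N σ := by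
  simpa using mem_lifts_of_split (N := N) σ []

lemma lifts_length : ∀ {σ τ : List ℕ}, τ ∈ lifts N σ → τ.length = σ.length
  | [], τ, h => by simp [lifts] at h; simp [h]
  | i :: t, τ, h => by
      rcases mem_lifts_cons.1 h with ⟨l, hl, rfl | rfl⟩ <;>
        simp [lifts_length hl]

lemma lifts_ne_nil {σ τ : List ℕ} (hσ : σ ≠ []) (h : τ ∈ lifts N σ) : τ ≠ [] := by
  have := lifts_length h
  intro h'
  apply hσ
  rw [h'] at this
  exact List.length_eq_zero_iff.1 this.symm

lemma lifts_head {σ τ : List ℕ} (hσ : σ ≠ []) (h : τ ∈ lifts N σ) :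
    τ.headD 0 = σ.headD 0 ∨ τ.headD 0 = σ.headD 0 + N := by
  rcases σ with _ | ⟨i, t⟩
  · exact absurd rfl hσ
  · rcases mem_lifts_cons.1 h with ⟨l, _, rfl | rfl⟩ <;> simp

lemma getLastD_of_ne_nil {l : List ℕ} (h : l ≠ []) (a b : ℕ) :
    l.getLastD a = l.getLastD b := by
  rcases l with _ | ⟨x, t⟩
  · exact absurd rfl h
  · rw [List.getLastD_cons, List.getLastD_cons]

/-- A lift which is admissible and ends at a lower-level letter is the word itself. -/
lemma lift_eq_of_last_low (hNpos : 0 < N)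
    (hP4 : ∀ a ∈ Finset.Icc 1 N, ∀ b ∈ Finset.Icc 1 N, p (a + N) b = 0) :
    ∀ σ τ : List ℕ, (∀ x ∈ σ, x ∈ Finset.Icc 1 N) → τ ∈ lifts N σ →
      τ.Chain' (edge p) → τ.getLastD 0 = σ.getLastD 0 → τ = σ
  | [], τ, _, h, _, _ => by simpa [lifts] using h
  | [i], τ, hm, h, _, hlast => by
      rcases mem_lifts_cons.1 h with ⟨l, hl, rfl | rfl⟩ <;>
        simp [lifts] at hl <;> subst hl
      · rfl
      · simp at hlast; omega
  | i :: u :: t, τ, hm, h, hc, hlast => by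
      rcases mem_lifts_cons.1 h with ⟨l, hl, rfl | rfl⟩
      · have hlne : l ≠ [] := lifts_ne_nil (by simp) hl
        have hlast' : l.getLastD 0 = (u :: t).getLastD 0 := by
          rw [List.getLastD_cons] at hlast
          rw [getLastD_of_ne_nil hlne 0 i, hlast, List.getLastD_cons,
            getLastD_of_ne_nil (l := u :: t) (by simp) 0 i]
        have := lift_eq_of_last_low hNpos hP4 (u :: t) l
          (fun x hx => hm x (List.mem_cons_of_mem _ hx)) hl hc.tail hlast'
        rw [this]
      · exfalso
        have hlne : l ≠ [] := lifts_ne_nil (by simp) hl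
        have := lift_eq_of_last_low hNpos hP4 (u :: t) l
          (fun x hx => hm x (List.mem_cons_of_mem _ hx)) hl hc.tail ?_
        · subst this
          have hedge : edge p (i + N) u := (List.isChain_cons_cons.1 hc).1
          have hi : i ∈ Finset.Icc 1 N := hm i (by simp)
          have hu : u ∈ Finset.Icc 1 N := hm u (by simp)
          have := hP4 i hi u hu
          exact absurd this (ne_of_gt hedge)
        · rw [List.getLastD_cons] at hlast
          rw [getLastD_of_ne_nil hlne 0 (i + N), hlast, List.getLastD_cons,
            getLastD_of_ne_nil (l := u :: t) (by simp) 0 i]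

/-- admissible upper-level walks of length `n+1` starting at `a` (recorded with
lower-level letters). -/
def Wset (p : ℕ → ℕ → ℝ) (N : ℕ) : ℕ → ℕ → Finset (List ℕ)
  | a, 0 => {[a]}
  | a, n + 1 =>
      ((Finset.Icc 1 N).filter (fun b => 0 < p (a + N) (b + N))).biUnion
        (fun b => (Wset p N b n).image (a :: ·))

lemma Wset_cons {a n : ℕ} {w : List ℕ} (h : w ∈ Wset p N a n) : ∃ t, w = a :: t := by
  cases n with
  | zero => simp [Wset] at h; exact ⟨[], h⟩
  | succ n =>
      simp only [Wset, Finset.mem_biUnion, Finset.mem_image] at h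
      obtain ⟨b, _, t, _, rfl⟩ := h
      exact ⟨t, rfl⟩

lemma Wset_props : ∀ (n : ℕ) {a : ℕ} {w : List ℕ}, a ∈ Finset.Icc 1 N →
    w ∈ Wset p N a n → (∀ x ∈ w, x ∈ Finset.Icc 1 N) ∧ w.Chain' (edge (qm p N))
  | 0, a, w, ha, h => by
      simp [Wset] at h
      subst h
      exact ⟨by simpa using ha, List.isChain_singleton a⟩
  | n + 1, a, w, ha, h => by
      simp only [Wset, Finset.mem_biUnion, Finset.mem_image, Finset.mem_filter] at h
      obtain ⟨b, ⟨hb, hab⟩, t, ht, rfl⟩ := h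
      obtain ⟨hmem, hchain⟩ := Wset_props n hb ht
      obtain ⟨t', rfl⟩ := Wset_cons ht
      constructor
      · intro x hx
        rcases List.mem_cons.1 hx with rfl | hx
        · exact ha
        · exact hmem x hx
      · exact List.isChain_cons_cons.2 ⟨hab, hchain⟩

/-- the sum of any `f` over `Icc 1 (2*N)` splits into lower and upper parts. -/
lemma sum_split (f : ℕ → ℝ) (hN : 0 < N) :
    ∑ j ∈ Finset.Icc 1 (2 * N), f j =
      ∑ b ∈ Finset.Icc 1 N, f b + ∑ b ∈ Finset.Icc 1 N, f (b + N) := by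
  have hsplit : Finset.Icc 1 (2 * N) = Finset.Icc 1 N ∪ Finset.Icc (N + 1) (2 * N) := by
    ext x
    simp only [Finset.mem_Icc, Finset.mem_union]
    omega
  have hdisj : Disjoint (Finset.Icc 1 N) (Finset.Icc (N + 1) (2 * N)) := by
    rw [Finset.disjoint_left]
    intro x hx hx'
    simp only [Finset.mem_Icc] at hx hx'
    omega
  have himg : Finset.Icc (N + 1) (2 * N) = (Finset.Icc 1 N).image (fun x => x + N) := by
    rw [Finset.image_add_right_Icc]
    congr 1 <;> omega
  rw [hsplit, Finset.sum_union hdisj, himg,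
    Finset.sum_image (by intro x _ y _ h; simp only at h; omega)]

lemma qrow_sum (hpsum : ∀ i ∈ Finset.Icc 1 (2 * N), ∑ j ∈ Finset.Icc 1 (2 * N), p i j = 1)
    (hP4 : ∀ a ∈ Finset.Icc 1 N, ∀ b ∈ Finset.Icc 1 N, p (a + N) b = 0)
    (hN : 0 < N) {a : ℕ} (ha : a ∈ Finset.Icc 1 N) :
    ∑ b ∈ Finset.Icc 1 N, p (a + N) (b + N) = 1 := by
  have haN : a + N ∈ Finset.Icc 1 (2 * N) := by
    simp only [Finset.mem_Icc] at ha ⊢; omega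
  have h1 := hpsum (a + N) haN
  rw [sum_split (f := fun j => p (a + N) j) hN] at h1
  have h0 : ∑ b ∈ Finset.Icc 1 N, p (a + N) b = 0 :=
    Finset.sum_eq_zero (fun b hb => hP4 a ha b hb)
  linarith

lemma Wset_sum_q (hp0 : ∀ i j, 0 ≤ p i j)
    (hpsum : ∀ i ∈ Finset.Icc 1 (2 * N), ∑ j ∈ Finset.Icc 1 (2 * N), p i j = 1)
    (hP4 : ∀ a ∈ Finset.Icc 1 N, ∀ b ∈ Finset.Icc 1 N, p (a + N) b = 0)
    (hN : 0 < N) :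
    ∀ (n : ℕ) {a : ℕ}, a ∈ Finset.Icc 1 N →
      ∑ w ∈ Wset p N a n, pword (qm p N) w = 1
  | 0, a, _ => by simp [Wset, pword_single]
  | n + 1, a, ha => by
      rw [show Wset p N a (n+1) =
        ((Finset.Icc 1 N).filter (fun b => 0 < p (a + N) (b + N))).biUnion
          (fun b => (Wset p N b n).image (a :: ·)) from rfl]
      rw [Finset.sum_biUnion]
      · have heach : ∀ b ∈ (Finset.Icc 1 N).filter (fun b => 0 < p (a + N) (b + N)),
            ∑ w ∈ (Wset p N b n).image (a :: ·), pword (qm p N) w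
              = qm p N a b := by
          intro b hb
          rw [Finset.sum_image (by intro x _ y _ h; exact List.cons_injective h)]
          have : ∀ w ∈ Wset p N b n,
              pword (qm p N) (a :: w) = qm p N a b * pword (qm p N) w := by
            intro w hw
            obtain ⟨t, rfl⟩ := Wset_cons hw
            rw [pword_cons₂]
          rw [Finset.sum_congr rfl this, ← Finset.mul_sum,
            Wset_sum_q hp0 hpsum hP4 hN n (Finset.mem_filter.1 hb).1, mul_one]
        rw [Finset.sum_congr rfl heach, Finset.sum_filter_of_ne
          (by intro b _ hb; by_contra h; push_neg at h
              exact hb (le_antisymm h (hp0 _ _)))]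
        exact qrow_sum hpsum hP4 hN ha
      · intro b hb b' hb' hne
        simp only [Function.onFun]
        rw [Finset.disjoint_left]
        intro w hw hw'
        simp only [Finset.mem_image] at hw hw'
        obtain ⟨t, ht, rfl⟩ := hw
        obtain ⟨t', ht', heq⟩ := hw'
        obtain ⟨u, rfl⟩ := Wset_cons ht
        obtain ⟨u', rfl⟩ := Wset_cons ht'
        apply hne
        injection List.cons_injective heq.symm with h1 h2

lemma Wset_sum_p (hp0 : ∀ i j, 0 ≤ p i j) {β : ℝ} (hβ0 : 0 ≤ β)
    (hβ : ∀ a ∈ Finset.Icc 1 N,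
      ∑ b ∈ (Finset.Icc 1 N).filter (fun b => 0 < p (a + N) (b + N)), p a b ≤ β) :
    ∀ (n : ℕ) {a : ℕ}, a ∈ Finset.Icc 1 N →
      ∑ w ∈ Wset p N a n, pword p w ≤ β ^ n
  | 0, a, _ => by simp [Wset, pword_single]
  | n + 1, a, ha => by
      rw [show Wset p N a (n+1) =
        ((Finset.Icc 1 N).filter (fun b => 0 < p (a + N) (b + N))).biUnion
          (fun b => (Wset p N b n).image (a :: ·)) from rfl]
      rw [Finset.sum_biUnion]
      · have hstep : ∀ b ∈ (Finset.Icc 1 N).filter (fun b => 0 < p (a + N) (b + N)),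
            ∑ w ∈ (Wset p N b n).image (a :: ·), pword p w ≤ p a b * β ^ n := by
          intro b hb
          rw [Finset.sum_image (by intro x _ y _ h; exact List.cons_injective h)]
          have : ∀ w ∈ Wset p N b n, pword p (a :: w) = p a b * pword p w := by
            intro w hw
            obtain ⟨t, rfl⟩ := Wset_cons hw
            rw [pword_cons₂]
          rw [Finset.sum_congr rfl this, ← Finset.mul_sum]
          exact mul_le_mul_of_nonneg_left
            (Wset_sum_p hp0 hβ0 hβ n (Finset.mem_filter.1 hb).1) (hp0 a b)
        calc _ ≤ ∑ b ∈ (Finset.Icc 1 N).filter (fun b => 0 < p (a + N) (b + N)),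
                p a b * β ^ n := Finset.sum_le_sum hstep
          _ = (∑ b ∈ (Finset.Icc 1 N).filter
                (fun b => 0 < p (a + N) (b + N)), p a b) * β ^ n := by
                rw [Finset.sum_mul]
          _ ≤ β * β ^ n :=
                mul_le_mul_of_nonneg_right (hβ a ha) (pow_nonneg hβ0 n)
          _ = β ^ (n + 1) := by rw [pow_succ]; ring
      · intro b hb b' hb' hne
        simp only [Function.onFun]
        rw [Finset.disjoint_left]
        intro w hw hw'
        simp only [Finset.mem_image] at hw hw'
        obtain ⟨t, ht, rfl⟩ := hw
        obtain ⟨t', ht', heq⟩ := hw'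
        obtain ⟨u, rfl⟩ := Wset_cons ht
        obtain ⟨u', rfl⟩ := Wset_cons ht'
        apply hne
        injection List.cons_injective heq.symm with h1 h2

lemma ratio_pow {r : ℝ} (hp0 : ∀ i j, 0 ≤ p i j) (hr1 : 1 ≤ r)
    (hr : ∀ a ∈ Finset.Icc 1 N, ∀ b ∈ Finset.Icc 1 N,
      0 < p (a + N) (b + N) → p (a + N) (b + N) ≤ r * p a b) :
    ∀ w : List ℕ, (∀ x ∈ w, x ∈ Finset.Icc 1 N) → w.Chain' (edge (qm p N)) →
      pword (qm p N) w ≤ r ^ (w.length - 1) * pword p w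
  | [], _, _ => by simp [pword_nil]
  | [a], _, _ => by simp [pword_single]
  | a :: b :: t, hm, hc => by
      rcases List.isChain_cons_cons.1 hc with ⟨h1, h2⟩
      have ih := ratio_pow hp0 hr1 hr (b :: t)
        (fun x hx => hm x (List.mem_cons_of_mem _ hx)) h2
      rw [pword_cons₂, pword_cons₂]
      have hab : qm p N a b ≤ r * p a b :=
        hr a (hm a (by simp)) b (hm b (by simp)) h1
      have h3 : qm p N a b * pword (qm p N) (b :: t)
          ≤ (r * p a b) * (r ^ ((b :: t).length - 1) * pword p (b :: t)) := by
        apply mul_le_mul hab ih (pword_nonneg (fun i j => hp0 _ _) _)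
        exact mul_nonneg (le_trans zero_le_one hr1) (hp0 a b)
      refine h3.trans (le_of_eq ?_)
      simp only [List.length_cons, Nat.add_sub_cancel]
      rw [pow_succ]
      ring

lemma sublist_pair_decomp : ∀ (l : List ℕ) (x : ℕ), [x, x] <+ l →
    ∃ s t u, l = s ++ x :: t ++ x :: u
  | [], x, h => by simp at h
  | b :: l', x, h => by
      cases h with
      | cons _ h' =>
          obtain ⟨s, t, u, rfl⟩ := sublist_pair_decomp l' x h'
          exact ⟨b :: s, t, u, rfl⟩
      | cons_cons _ h' =>
          have hx : b ∈ l' := List.singleton_sublist.1 h'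
          obtain ⟨t, u, rfl⟩ := List.append_of_mem hx
          exact ⟨[], t, u, by simp⟩

lemma ratio_bound (hN : 0 < N) {r : ℝ} (hp0 : ∀ i j, 0 ≤ p i j) (hr1 : 1 ≤ r)
    (hr : ∀ a ∈ Finset.Icc 1 N, ∀ b ∈ Finset.Icc 1 N,
      0 < p (a + N) (b + N) → p (a + N) (b + N) ≤ r * p a b)
    (hcyc : ∀ (x : ℕ) (w : List ℕ), x ∈ Finset.Icc 1 N →
      (∀ y ∈ w, y ∈ Finset.Icc 1 N) → w ≠ [] →
      (x :: w).Chain' (edge (qm p N)) → w.getLast? = some x →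
      pword (qm p N) (x :: w) < pword p (x :: w)) :
    ∀ (n : ℕ) (w : List ℕ), w.length ≤ n → (∀ x ∈ w, x ∈ Finset.Icc 1 N) →
      w.Chain' (edge (qm p N)) → pword (qm p N) w ≤ r ^ N * pword p w := by
  intro n
  induction n with
  | zero =>
      intro w hlen _ _
      have : w = [] := List.length_eq_zero_iff.1 (Nat.le_zero.1 hlen)
      subst this
      simp [pword_nil]
      exact one_le_pow₀ hr1
  | succ n ih =>
      intro w hlen hm hc
      by_cases hshort : w.length ≤ N + 1
      · have h1 := ratio_pow hp0 hr1 hr w hm hc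
        refine h1.trans (mul_le_mul_of_nonneg_right ?_ (pword_nonneg hp0 w))
        exact pow_le_pow_right₀ hr1 (by omega)
      · push_neg at hshort
        -- find a repeated letter among the first N+1 letters
        have hnotnodup : ¬ (w.take (N + 1)).Nodup := by
          intro hnd
          have hcard : (w.take (N + 1)).toFinset.card = N + 1 := by
            rw [List.toFinset_card_of_nodup hnd, List.length_take]
            omega
          have hsub : (w.take (N + 1)).toFinset ⊆ Finset.Icc 1 N := by
            intro x hx
            exact hm x (List.take_subset _ _ (List.mem_toFinset.1 hx))
          have := Finset.card_le_card hsub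
          rw [hcard, Nat.card_Icc] at this
          omega
        rw [List.nodup_iff_sublist] at hnotnodup
        push_neg at hnotnodup
        obtain ⟨x, hxx⟩ := hnotnodup
        have hxxw : [x, x] <+ w := hxx.trans (List.take_sublist _ _)
        obtain ⟨s, t, u, rfl⟩ := sublist_pair_decomp w x hxxw
        -- notation
        have hw_eq : s ++ x :: t ++ x :: u = s ++ (x :: (t ++ x :: u)) := by simp
        have hw_eq2 : x :: (t ++ x :: u) = (x :: t) ++ x :: u := by simp
        -- chains
        rw [hw_eq] at hc hm hlen ⊢
        rcases List.isChain_append.1 hc with ⟨hcs, hcrest, hlink⟩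
        rw [hw_eq2] at hcrest
        rcases List.isChain_append.1 hcrest with ⟨hcxt, hcxu, hlink2⟩
        -- cycle and reduced word
        have hcyc_chain : (x :: (t ++ [x])).Chain' (edge (qm p N)) := by
          have : x :: (t ++ [x]) = (x :: t) ++ [x] := by simp
          rw [this]
          refine List.isChain_append.2 ⟨hcxt, List.isChain_singleton x, ?_⟩
          intro a ha b hb
          simp only [List.head?_cons, Option.mem_some_iff] at hb
          subst hb
          exact hlink2 a ha x (by simp)
        have hw'_chain : (s ++ x :: u).Chain' (edge (qm p N)) := by
          refine List.isChain_append.2 ⟨hcs, hcxu, ?_⟩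
          intro a ha b hb
          simp only [List.head?_cons, Option.mem_some_iff] at hb
          subst hb
          exact hlink a ha x (by simp)
        have hmx : x ∈ Finset.Icc 1 N := hm x (by simp)
        have hmt : ∀ y ∈ t ++ [x], y ∈ Finset.Icc 1 N := by
          intro y hy
          rcases List.mem_append.1 hy with hy | hy
          · exact hm y (by simp [hy])
          · simp at hy; subst hy; exact hmx
        have hmw' : ∀ y ∈ s ++ x :: u, y ∈ Finset.Icc 1 N := by
          intro y hy
          apply hm y
          rcases List.mem_append.1 hy with hy | hy
          · simp [hy]
          · rcases List.mem_cons.1 hy with rfl | hy <;> simp [hy]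
        have hclt := hcyc x (t ++ [x]) hmx hmt (by simp) hcyc_chain
          List.getLast?_concat
        have hlen' : (s ++ x :: u).length ≤ n := by
          simp only [List.length_append, List.length_cons] at hlen ⊢
          omega
        have ihw' := ih (s ++ x :: u) hlen' hmw' hw'_chain
        -- products
        have splitP : ∀ P : ℕ → ℕ → ℝ,
            pword P (s ++ (x :: (t ++ x :: u)))
              = (pword P (s ++ [x]) * pword P (x :: u)) * pword P (x :: (t ++ [x])) := by
          intro P
          rw [pword_split s x (t ++ x :: u)]
          have : (x : ℕ) :: (t ++ x :: u) = (x :: t) ++ x :: u := by simp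
          rw [show pword P (x :: (t ++ x :: u)) = pword P ((x :: t) ++ x :: u) by rw [← this],
            pword_split (x :: t) x u]
          have e2 : (x :: t) ++ [x] = x :: (t ++ [x]) := by simp
          rw [e2]
          ring
        have hq0 : ∀ l, 0 ≤ pword (qm p N) l := pword_nonneg (fun i j => hp0 _ _)
        have hp0' : ∀ l, 0 ≤ pword p l := pword_nonneg hp0
        calc pword (qm p N) (s ++ (x :: (t ++ x :: u)))
            = (pword (qm p N) (s ++ [x]) * pword (qm p N) (x :: u))
                * pword (qm p N) (x :: (t ++ [x])) := splitP _
          _ ≤ (pword (qm p N) (s ++ [x]) * pword (qm p N) (x :: u))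
                * pword p (x :: (t ++ [x])) := by
              apply mul_le_mul_of_nonneg_left hclt.le
              exact mul_nonneg (hq0 _) (hq0 _)
          _ = pword (qm p N) (s ++ x :: u) * pword p (x :: (t ++ [x])) := by
              rw [pword_split s x u]
          _ ≤ (r ^ N * pword p (s ++ x :: u)) * pword p (x :: (t ++ [x])) := by
              apply mul_le_mul_of_nonneg_right ihw' (hp0' _)
          _ = r ^ N * pword p (s ++ (x :: (t ++ x :: u))) := by
              rw [splitP p, pword_split s x u]
              ring

/-- there is a closed admissible walk on which the upper-level weight product is at least
the lower-level one. -/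
lemma exists_good_cycle (hN : 2 ≤ N) (hp0 : ∀ i j, 0 ≤ p i j)
    (hpsum : ∀ i ∈ Finset.Icc 1 (2 * N), ∑ j ∈ Finset.Icc 1 (2 * N), p i j = 1)
    (hA1 : A1 p N) (hA2 : A2 p N) (hA3 : A3 p N) :
    ∃ (v : ℕ) (w : List ℕ), v ∈ Finset.Icc 1 N ∧ w ≠ [] ∧
      (∀ x ∈ w, x ∈ Finset.Icc 1 N) ∧ (v :: w).Chain' (edge p) ∧
      (v :: w).Chain' (edge (qm p N)) ∧ w.getLast? = some v ∧
      pword p (v :: w) ≤ pword (qm p N) (v :: w) := by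
  have hNpos : 0 < N := by omega
  have hP4 := hA1.2.2
  -- A3 consequences
  have hqp : ∀ a ∈ Finset.Icc 1 N, ∀ b ∈ Finset.Icc 1 N,
      0 < p (a + N) (b + N) → 0 < p a b := by
    intro a ha b hb h
    rcases hA3 a ha b hb with ⟨h1, _, _, h4⟩ | ⟨h1, _, _, _⟩
    · rw [h4] at h; exact absurd h (lt_irrefl 0)
    · exact h1
  have hpq : ∀ a ∈ Finset.Icc 1 N, ∀ b ∈ Finset.Icc 1 N,
      0 < p a b → 0 < p (a + N) (b + N) := by
    intro a ha b hb h
    rcases hA3 a ha b hb with ⟨h1, _, _, _⟩ | ⟨_, _, _, h4⟩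
    · rw [h1] at h; exact absurd h (lt_irrefl 0)
    · exact h4
  -- the constant r
  set r : ℝ := 1 + ∑ a ∈ Finset.Icc 1 N, ∑ b ∈ Finset.Icc 1 N,
      (if 0 < p a b then p (a + N) (b + N) / p a b else 0) with hr_def
  have hterm_nonneg : ∀ a b : ℕ,
      0 ≤ (if 0 < p a b then p (a + N) (b + N) / p a b else 0) := by
    intro a b
    split
    · exact div_nonneg (hp0 _ _) (le_of_lt ‹_›)
    · exact le_refl 0
  have hr1 : 1 ≤ r := by
    have : 0 ≤ ∑ a ∈ Finset.Icc 1 N, ∑ b ∈ Finset.Icc 1 N,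
        (if 0 < p a b then p (a + N) (b + N) / p a b else 0) :=
      Finset.sum_nonneg (fun a _ => Finset.sum_nonneg (fun b _ => hterm_nonneg a b))
    rw [hr_def]
    linarith
  have hr : ∀ a ∈ Finset.Icc 1 N, ∀ b ∈ Finset.Icc 1 N,
      0 < p (a + N) (b + N) → p (a + N) (b + N) ≤ r * p a b := by
    intro a ha b hb hq
    have hpab := hqp a ha b hb hq
    have h1 : p (a + N) (b + N) / p a b
        ≤ ∑ b' ∈ Finset.Icc 1 N, (if 0 < p a b' then p (a + N) (b' + N) / p a b' else 0) := by
      calc p (a + N) (b + N) / p a b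
          = (if 0 < p a b then p (a + N) (b + N) / p a b else 0) := by rw [if_pos hpab]
        _ ≤ _ := Finset.single_le_sum
            (f := fun b' => (if 0 < p a b' then p (a + N) (b' + N) / p a b' else 0))
            (fun b' _ => hterm_nonneg a b') hb
    have h2 : ∑ b' ∈ Finset.Icc 1 N, (if 0 < p a b' then p (a + N) (b' + N) / p a b' else 0)
        ≤ ∑ a' ∈ Finset.Icc 1 N, ∑ b' ∈ Finset.Icc 1 N,
          (if 0 < p a' b' then p (a' + N) (b' + N) / p a' b' else 0) :=
      Finset.single_le_sum
        (f := fun a' => ∑ b' ∈ Finset.Icc 1 N,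
          (if 0 < p a' b' then p (a' + N) (b' + N) / p a' b' else 0))
        (fun a' _ => Finset.sum_nonneg (fun b' _ => hterm_nonneg a' b')) ha
    have h3 : p (a + N) (b + N) / p a b ≤ r := by
      rw [hr_def]; linarith
    calc p (a + N) (b + N) = (p (a + N) (b + N) / p a b) * p a b := by
          field_simp
      _ ≤ r * p a b := mul_le_mul_of_nonneg_right h3 (hp0 a b)
  -- the constant eps
  set rowU : ℕ → ℝ := fun a => ∑ b ∈ Finset.Icc 1 N, p a (b + N) with hrowU
  have hIccne : (Finset.Icc 1 N).Nonempty := ⟨1, by simp [Finset.mem_Icc]; omega⟩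
  have himgne : ((Finset.Icc 1 N).image rowU).Nonempty := hIccne.image rowU
  set eps : ℝ := ((Finset.Icc 1 N).image rowU).min' himgne with heps
  have hrowU_pos : ∀ a ∈ Finset.Icc 1 N, 0 < rowU a := by
    intro a ha
    obtain ⟨hcard, _⟩ := hA2 a ha
    have hne : ((Finset.Icc 1 N).filter fun j => 0 < p a j).Nonempty := by
      rw [← Finset.card_pos]; omega
    obtain ⟨b, hb⟩ := hne
    rw [Finset.mem_filter] at hb
    have hupper : 0 < p a (b + N) := by
      rcases hA3 a ha b hb.1 with ⟨h1, _, _, _⟩ | ⟨_, h2, _, _⟩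
      · rw [h1] at hb; exact absurd hb.2 (lt_irrefl 0)
      · exact h2
    exact Finset.sum_pos' (fun b' _ => hp0 a (b' + N)) ⟨b, hb.1, hupper⟩
  have heps_pos : 0 < eps := by
    obtain ⟨a₀, ha₀, ha₀eq⟩ := Finset.mem_image.1 (Finset.min'_mem _ himgne)
    rw [heps, ← ha₀eq]
    exact hrowU_pos a₀ ha₀
  have heps_le : ∀ a ∈ Finset.Icc 1 N, eps ≤ rowU a := by
    intro a ha
    exact Finset.min'_le _ _ (Finset.mem_image_of_mem rowU ha)
  have hβ : ∀ a ∈ Finset.Icc 1 N,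
      ∑ b ∈ (Finset.Icc 1 N).filter (fun b => 0 < p (a + N) (b + N)), p a b ≤ 1 - eps := by
    intro a ha
    have hsub : ∑ b ∈ (Finset.Icc 1 N).filter (fun b => 0 < p (a + N) (b + N)), p a b
        ≤ ∑ b ∈ Finset.Icc 1 N, p a b :=
      Finset.sum_le_sum_of_subset_of_nonneg (Finset.filter_subset _ _)
        (fun b _ _ => hp0 a b)
    have hsum1 : ∑ b ∈ Finset.Icc 1 N, p a b + rowU a = 1 := by
      have haa : a ∈ Finset.Icc 1 (2 * N) := by
        simp only [Finset.mem_Icc] at ha ⊢; omega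
      have := hpsum a haa
      rw [sum_split (f := fun j => p a j) hNpos] at this
      exact this
    have := heps_le a ha
    linarith
  have hβ0 : 0 ≤ 1 - eps := by
    obtain ⟨a₀, ha₀, ha₀eq⟩ := Finset.mem_image.1 (Finset.min'_mem _ himgne)
    have h1 : ∑ b ∈ Finset.Icc 1 N, p a₀ b + rowU a₀ = 1 := by
      have haa : a₀ ∈ Finset.Icc 1 (2 * N) := by
        simp only [Finset.mem_Icc] at ha₀ ⊢; omega
      have := hpsum a₀ haa
      rw [sum_split (f := fun j => p a₀ j) hNpos] at this
      exact this
    have h2 : 0 ≤ ∑ b ∈ Finset.Icc 1 N, p a₀ b :=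
      Finset.sum_nonneg (fun b _ => hp0 a₀ b)
    rw [heps, ← ha₀eq]
    linarith
  -- main contradiction argument
  by_contra hcon
  push_neg at hcon
  have hcyc : ∀ (x : ℕ) (w : List ℕ), x ∈ Finset.Icc 1 N →
      (∀ y ∈ w, y ∈ Finset.Icc 1 N) → w ≠ [] →
      (x :: w).Chain' (edge (qm p N)) → w.getLast? = some x →
      pword (qm p N) (x :: w) < pword p (x :: w) := by
    intro x w hx hw hwne hchq hlast
    have hchp : (x :: w).Chain' (edge p) := by
      apply chain'_imp_mem (P := fun y => y ∈ Finset.Icc 1 N)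
        (R := edge (qm p N)) (S := edge p)
        (fun a b ha hb hab => hqp a ha b hb hab) (x :: w)
        (by intro y hy; rcases List.mem_cons.1 hy with rfl | hy
            exacts [hx, hw y hy]) hchq
    exact hcon x w hx hwne hw hchp hchq hlast
  -- choose n large
  have hrNpos : (0:ℝ) < r ^ N := pow_pos (by linarith) N
  obtain ⟨n, hn⟩ := exists_pow_lt_of_lt_one (x := (r ^ N)⁻¹) (y := 1 - eps)
    (by positivity) (by linarith)
  have hsmall : (1 - eps) ^ n * r ^ N < 1 := by
    have := mul_lt_mul_of_pos_right hn hrNpos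
    rwa [inv_mul_cancel₀ (ne_of_gt hrNpos)] at this
  -- walks from vertex 1
  have h1mem : (1:ℕ) ∈ Finset.Icc 1 N := by simp [Finset.mem_Icc]; omega
  have hsumq := Wset_sum_q hp0 hpsum hP4 hNpos n h1mem
  have hsump := Wset_sum_p hp0 hβ0 hβ n h1mem
  have hWne : (Wset p N 1 n).Nonempty := by
    rw [Finset.nonempty_iff_ne_empty]
    intro h
    rw [h] at hsumq
    simp at hsumq
  -- find a good walk
  have hgood : ∃ w ∈ Wset p N 1 n, pword p w ≤ (1 - eps) ^ n * pword (qm p N) w := by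
    by_contra hbad
    push_neg at hbad
    have := Finset.sum_lt_sum_of_nonempty hWne
      (f := fun w => (1 - eps) ^ n * pword (qm p N) w) (fun w hw => hbad w hw)
    rw [← Finset.mul_sum, hsumq, mul_one] at this
    exact absurd (lt_of_lt_of_le this hsump) (lt_irrefl _)
  obtain ⟨w, hwmem, hwle⟩ := hgood
  obtain ⟨hwΨ, hwchq⟩ := Wset_props n h1mem hwmem
  have hwchp : w.Chain' (edge p) :=
    chain'_imp_mem (fun a b ha hb hab => hqp a ha b hb hab) w hwΨ hwchq
  have hwpos : 0 < pword p w := pword_pos hp0 w hwchp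
  have hbound := ratio_bound hNpos hp0 hr1 hr hcyc (w.length) w le_rfl hwΨ hwchq
  have : pword p w ≤ ((1 - eps) ^ n * r ^ N) * pword p w := by
    calc pword p w ≤ (1 - eps) ^ n * pword (qm p N) w := hwle
      _ ≤ (1 - eps) ^ n * (r ^ N * pword p w) := by
          apply mul_le_mul_of_nonneg_left hbound (pow_nonneg hβ0 n)
      _ = ((1 - eps) ^ n * r ^ N) * pword p w := by ring
  have h1le : (1:ℝ) ≤ (1 - eps) ^ n * r ^ N := by
    by_contra hlt
    push_neg at hlt
    nlinarith
  linarith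

/-- `k`-fold repetition of a list. -/
def crep (c : List ℕ) : ℕ → List ℕ
  | 0 => []
  | k + 1 => c ++ crep c k

lemma crep_length (c : List ℕ) : ∀ k, (crep c k).length = k * c.length
  | 0 => by simp [crep]
  | k + 1 => by
      simp [crep, crep_length c k]
      ring

lemma crep_mem {c : List ℕ} : ∀ k, ∀ x ∈ crep c k, x ∈ c
  | 0, x, hx => by simp [crep] at hx
  | k + 1, x, hx => by
      rcases List.mem_append.1 hx with hx | hx
      · exact hx
      · exact crep_mem k x hx

lemma crep_add (c : List ℕ) : ∀ a b : ℕ, crep c (a + b) = crep c a ++ crep c b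
  | 0, b => by simp [crep]
  | a + 1, b => by
      have : a + 1 + b = (a + b) + 1 := by omega
      rw [this]
      show c ++ crep c (a + b) = (c ++ crep c a) ++ crep c b
      rw [crep_add c a b, List.append_assoc]

lemma crep_ne_nil {c : List ℕ} (hc : c ≠ []) {k : ℕ} (hk : 0 < k) : crep c k ≠ [] := by
  intro h
  have := crep_length c k
  rw [h] at this
  simp at this
  rcases this with h' | h'
  · omega
  · exact hc h'

lemma pword_v_crep (P : ℕ → ℕ → ℝ) {v : ℕ} {c : List ℕ} (hc : c.getLast? = some v)
    (Y : List ℕ) : ∀ k : ℕ,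
      pword P (v :: (crep c k ++ Y)) = (pword P (v :: c)) ^ k * pword P (v :: Y)
  | 0 => by simp [crep]
  | k + 1 => by
      obtain ⟨c', hc'⟩ := List.getLast?_eq_some_iff.1 hc
      have heq : (v : ℕ) :: (crep c (k + 1) ++ Y)
          = (v :: c') ++ (v :: (crep c k ++ Y)) := by
        show (v : ℕ) :: ((c ++ crep c k) ++ Y) = _
        rw [hc']
        simp
      rw [heq, pword_split (v :: c') v (crep c k ++ Y),
        pword_v_crep P hc Y k]
      have : (v :: c') ++ [v] = v :: c := by rw [hc']; simp
      rw [this, pow_succ]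
      ring

lemma chain'_v_crep {R : ℕ → ℕ → Prop} {v : ℕ} {c : List ℕ}
    (hc : c.getLast? = some v) (hcc : (v :: c).Chain' R) {Y : List ℕ}
    (hY : (v :: Y).Chain' R) : ∀ k : ℕ, (v :: (crep c k ++ Y)).Chain' R
  | 0 => by simpa [crep] using hY
  | k + 1 => by
      obtain ⟨c', hc'⟩ := List.getLast?_eq_some_iff.1 hc
      have heq : (v : ℕ) :: (crep c (k + 1) ++ Y)
          = (v :: c) ++ (crep c k ++ Y) := by
        show (v : ℕ) :: ((c ++ crep c k) ++ Y) = _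
        simp
      rw [heq]
      apply chain'_glue hcc _ (chain'_v_crep hc hcc hY k)
      rw [hc', show v :: (c' ++ [v]) = (v :: c') ++ [v] from by simp]
      exact List.getLast?_concat

lemma getLast?_crep {c : List ℕ} (hc : c ≠ []) :
    ∀ k : ℕ, (crep c (k + 1)).getLast? = c.getLast?
  | 0 => by show (c ++ crep c 0).getLast? = _; simp [crep]
  | k + 1 => by
      show (c ++ crep c (k + 1)).getLast? = _
      rw [List.getLast?_append_of_ne_nil _ (crep_ne_nil hc (by omega))]
      exact getLast?_crep hc k

lemma exists_in_edge_aux :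
    ∀ (c : List ℕ) (x w : ℕ), List.Chain (edge p) x (c ++ [w]) → x ∈ Finset.Icc 1 N →
      (∀ y ∈ c, y ∈ Finset.Icc 1 N) → ∃ u ∈ Finset.Icc 1 N, 0 < p u w
  | [], x, w, hch, hx, _ => by
      rw [List.nil_append, List.Chain, List.chain_cons] at hch
      exact ⟨x, hx, hch.1⟩
  | d :: c, x, w, hch, hx, hc => by
      rw [List.cons_append, List.Chain, List.chain_cons] at hch
      exact exists_in_edge_aux c d w hch.2 (hc d (by simp))
        (fun y hy => hc y (by simp [hy]))

lemma exists_backward_walk (hin : ∀ w ∈ Finset.Icc 1 N, ∃ u ∈ Finset.Icc 1 N, 0 < p u w)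
    {v : ℕ} (hv : v ∈ Finset.Icc 1 N) :
    ∀ m : ℕ, ∃ l : List ℕ, l.length = m + 1 ∧ (∀ x ∈ l, x ∈ Finset.Icc 1 N) ∧
      l.Chain' (edge p) ∧ l.getLast? = some v
  | 0 => ⟨[v], by simp, by simpa using hv, List.isChain_singleton v, by simp⟩
  | m + 1 => by
      obtain ⟨l, hlen, hmem, hch, hlast⟩ := exists_backward_walk hin hv m
      rcases l with _ | ⟨a, t⟩
      · simp at hlen
      · obtain ⟨u, hu, hedge⟩ := hin a (hmem a (by simp))
        refine ⟨u :: a :: t, by simp [← hlen], ?_, ?_, ?_⟩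
        · intro x hx
          rcases List.mem_cons.1 hx with rfl | hx
          · exact hu
          · exact hmem x hx
        · exact List.isChain_cons_cons.2 ⟨hedge, hch⟩
        · rw [List.getLast?_cons_cons]
          exact hlast

end Aux25

/-- **Lemma 2.5.** Assume (A1)–(A3). For every `i ∈ Ψ` there exists `k₀` such that for
every `n ≥ k₀` there is some `σ ∈ 𝒮_n(i)` with `I_{1,σ} < (χ_i/χ_{i⁺}) I_{2,σ}`. -/
theorem stmt11
    (N : ℕ) (hN : 2 ≤ N)
    (p : ℕ → ℕ → ℝ) (χ : ℕ → ℝ)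
    (hp0 : ∀ i j, 0 ≤ p i j)
    (hpsupp : ∀ i j, 0 < p i j → i ∈ Finset.Icc 1 (2 * N) ∧ j ∈ Finset.Icc 1 (2 * N))
    (hpsum : ∀ i ∈ Finset.Icc 1 (2 * N), ∑ j ∈ Finset.Icc 1 (2 * N), p i j = 1)
    (hχpos : ∀ i ∈ Finset.Icc 1 (2 * N), 0 < χ i)
    (hχsum : ∑ i ∈ Finset.Icc 1 (2 * N), χ i = 1)
    (hA1 : A1 p N) (hA2 : A2 p N) (hA3 : A3 p N) :
    ∀ i ∈ Finset.Icc 1 N, ∃ k0 : ℕ, ∀ n : ℕ, k0 ≤ n →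
      ∃ σ : List ℕ, isSword p N σ ∧ σ.length = n ∧ σ.getLastD 0 = i ∧
        Ipart p χ N i σ < χ i / χ (i + N) * Ipart p χ N (i + N) σ := by
  intro i hi
  have hNpos : 0 < N := by omega
  have hP4 := hA1.2.2
  have hqp : ∀ a ∈ Finset.Icc 1 N, ∀ b ∈ Finset.Icc 1 N,
      0 < p (a + N) (b + N) → 0 < p a b := by
    intro a ha b hb h
    rcases hA3 a ha b hb with ⟨h1, _, _, h4⟩ | ⟨h1, _, _, _⟩
    · rw [h4] at h; exact absurd h (lt_irrefl 0)
    · exact h1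
  have hpq : ∀ a ∈ Finset.Icc 1 N, ∀ b ∈ Finset.Icc 1 N,
      0 < p a b → 0 < p (a + N) (b + N) := by
    intro a ha b hb h
    rcases hA3 a ha b hb with ⟨h1, _, _, _⟩ | ⟨_, _, _, h4⟩
    · rw [h1] at h; exact absurd h (lt_irrefl 0)
    · exact h4
  -- the good cycle
  obtain ⟨v, cb, hvΨ, hcbne, hcbmem, hchp, hchq, hcblast, hPQ⟩ :=
    exists_good_cycle hN hp0 hpsum hA1 hA2 hA3
  rcases cb with _ | ⟨c₁, cbt⟩
  · exact absurd rfl hcbne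
  set cb : List ℕ := c₁ :: cbt with hcb_def
  have hcbne' : cb ≠ [] := by simp [hcb_def]
  -- the path from v to i
  obtain ⟨d, hdmem, hdchain⟩ := hA1.1 v hvΨ i hi
  set S : List ℕ := d ++ [i] with hS_def
  have hSne : S ≠ [] := by simp [hS_def]
  have hSmem : ∀ x ∈ S, x ∈ Finset.Icc 1 N := by
    intro x hx
    rw [hS_def] at hx
    rcases List.mem_append.1 hx with hx | hx
    · exact hdmem x hx
    · simp at hx; subst hx; exact hi
  have hvSchainp : (v :: S).Chain' (edge p) := hdchain
  have hvSmem : ∀ x ∈ v :: S, x ∈ Finset.Icc 1 N := by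
    intro x hx
    rcases List.mem_cons.1 hx with rfl | hx
    · exact hvΨ
    · exact hSmem x hx
  have hvSchainq : (v :: S).Chain' (edge (qm p N)) :=
    chain'_imp_mem (fun a b ha hb hab => hpq a ha b hb hab) (v :: S) hvSmem hvSchainp
  have hSlast : S.getLast? = some i := List.getLast?_concat
  -- cycle data
  have hvcbmem : ∀ x ∈ v :: cb, x ∈ Finset.Icc 1 N := by
    intro x hx
    rcases List.mem_cons.1 hx with rfl | hx
    · exact hvΨ
    · exact hcbmem x hx
  have hc₁Ψ : c₁ ∈ Finset.Icc 1 N := hcbmem c₁ (by simp [hcb_def])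
  have hpvc₁ : 0 < p v c₁ := (List.isChain_cons_cons.1 hchp).1
  have hjump : 0 < p v (c₁ + N) := by
    rcases hA3 v hvΨ c₁ hc₁Ψ with ⟨h1, _, _, _⟩ | ⟨_, h2, _, _⟩
    · rw [h1] at hpvc₁; exact absurd hpvc₁ (lt_irrefl 0)
    · exact h2
  have hqvc₁ : 0 < qm p N v c₁ := hpq v hvΨ c₁ hc₁Ψ hpvc₁
  set Pc : ℝ := pword p (v :: cb) with hPc_def
  set Qc : ℝ := pword (qm p N) (v :: cb) with hQc_def
  have hPc : 0 < Pc := pword_pos hp0 _ hchp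
  have hQc : 0 < Qc := pword_pos (fun a b => hp0 _ _) _ hchq
  set Ps : ℝ := pword p (v :: S) with hPs_def
  set Qs : ℝ := pword (qm p N) (v :: S) with hQs_def
  have hPs : 0 < Ps := pword_pos hp0 _ hvSchainp
  have hQs : 0 < Qs := pword_pos (fun a b => hp0 _ _) _ hvSchainq
  have hχi : 0 < χ i := hχpos i (by simp only [Finset.mem_Icc] at hi ⊢; omega)
  have hχiN : 0 < χ (i + N) := hχpos (i + N) (by simp only [Finset.mem_Icc] at hi ⊢; omega)
  set c₀ : ℝ := p v (c₁ + N) * Qs / (qm p N v c₁ * Ps) with hc₀_def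
  have hc₀ : 0 < c₀ := div_pos (mul_pos hjump hQs) (mul_pos hqvc₁ hPs)
  obtain ⟨K₀, hK₀⟩ := exists_nat_gt (χ (i + N) / (χ i * c₀))
  set K : ℕ := K₀ + 1 with hK_def
  have hK : χ (i + N) / (χ i * c₀) < (K : ℝ) := by
    refine hK₀.trans_le ?_
    exact_mod_cast Nat.le_succ K₀
  set L : ℕ := cb.length with hL_def
  have hL : 0 < L := by simp [hL_def, hcb_def]
  -- in-edges
  have hin : ∀ w ∈ Finset.Icc 1 N, ∃ u ∈ Finset.Icc 1 N, 0 < p u w := by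
    intro w hw
    obtain ⟨c, hc1, hc2⟩ := hA1.1 w hw w hw
    exact exists_in_edge_aux c w w hc2 hw hc1
  refine ⟨K * L + S.length + 1, ?_⟩
  intro n hn
  set m : ℕ := n - (K * L + S.length) with hm_def
  have hm1 : 1 ≤ m := by omega
  obtain ⟨pre, hprelen, hpremem, hprechain, hprelast⟩ := exists_backward_walk hin hvΨ (m - 1)
  have hprelen' : pre.length = m := by omega
  rcases pre with _ | ⟨a₀, pt⟩
  · simp at hprelen
  set pre : List ℕ := a₀ :: pt with hpre_def
  have hprene : pre ≠ [] := by simp [hpre_def]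
  obtain ⟨pre', hpre'⟩ := List.getLast?_eq_some_iff.1 hprelast
  have ha₀Ψ : a₀ ∈ Finset.Icc 1 N := hpremem a₀ (by simp [hpre_def])
  have hχa₀ : 0 < χ a₀ := hχpos a₀ (by simp only [Finset.mem_Icc] at ha₀Ψ ⊢; omega)
  -- the word σ
  set σ : List ℕ := pre ++ (crep cb K ++ S) with hσ_def
  have hσsplit : σ = pre' ++ (v :: (crep cb K ++ S)) := by
    rw [hσ_def, hpre']
    simp
  have hσmem : ∀ x ∈ σ, x ∈ Finset.Icc 1 N := by
    intro x hx
    rw [hσ_def] at hx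
    rcases List.mem_append.1 hx with hx | hx
    · exact hpremem x hx
    · rcases List.mem_append.1 hx with hx | hx
      · exact hcbmem x (crep_mem _ x hx)
      · exact hSmem x hx
  have hσchain : σ.Chain' (edge p) := by
    rw [hσ_def]
    exact chain'_glue hprechain hprelast (chain'_v_crep hcblast hchp hvSchainp K)
  have hσne : σ ≠ [] := by
    rw [hσ_def, hpre_def]
    simp
  have hσlen : σ.length = n := by
    rw [hσ_def]
    simp only [List.length_append, crep_length]
    rw [hprelen', ← hL_def]
    omega
  have hcrepSne : crep cb K ++ S ≠ [] := by
    intro h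
    rw [List.append_eq_nil_iff] at h
    exact hSne h.2
  have hσlast : σ.getLastD 0 = i := by
    rw [List.getLastD_eq_getLast?, hσ_def,
      List.getLast?_append_of_ne_nil _ hcrepSne,
      List.getLast?_append_of_ne_nil _ hSne, hSlast]
    rfl
  have hσGam : σ ∈ Gam p N σ := by
    simp only [Gam, Finset.mem_filter]
    exact ⟨lifts_self σ, hσchain⟩
  have hSword : isSword p N σ := ⟨⟨hσne, hσmem⟩, ⟨σ, hσGam⟩⟩
  have hσhead : σ.headD 0 = a₀ := by
    rw [hσ_def, hpre_def]
    rfl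
  have hpσ : pword p σ = pword p pre * (Pc ^ K * Ps) := by
    rw [hσsplit, pword_split pre' v (crep cb K ++ S), ← hpre',
      pword_v_crep p hcblast S K]
  have hPW : 0 < pword p pre := pword_pos hp0 _ hprechain
  have hσpos : 0 < pword p σ := pword_pos hp0 _ hσchain
  -- I₁ bound
  have hI1 : Ipart p χ N i σ ≤ χ a₀ * pword p σ := by
    have hsub : ((Gam p N σ).filter (fun τ => τ.getLastD 0 = i)) ⊆ {σ} := by
      intro τ hτ
      rw [Finset.mem_filter] at hτ
      obtain ⟨hτ', hτlast⟩ := hτ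
      simp only [Gam, Finset.mem_filter] at hτ'
      rw [Finset.mem_singleton]
      exact lift_eq_of_last_low hNpos hP4 σ τ hσmem hτ'.1 hτ'.2
        (by rw [hτlast, hσlast])
    calc Ipart p χ N i σ ≤ ∑ τ ∈ {σ}, χ (τ.headD 0) * pword p τ := by
          apply Finset.sum_le_sum_of_subset_of_nonneg hsub
          intro τ hτ _
          rw [Finset.mem_singleton] at hτ
          subst hτ
          have hh : 0 < χ (σ.headD 0) := by rw [hσhead]; exact hχa₀
          exact mul_nonneg hh.le (pword_nonneg hp0 σ)
      _ = χ a₀ * pword p σ := by rw [Finset.sum_singleton, hσhead]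
  -- the jump lifts
  set τf : ℕ → List ℕ :=
    fun j => (pre ++ crep cb j) ++ ((crep cb (K - j) ++ S).map (· + N)) with hτf_def
  have hq0 : qm p N v c₁ ≠ 0 := ne_of_gt hqvc₁
  have hPs0 : Ps ≠ 0 := ne_of_gt hPs
  set D : ℝ := pword p pre * p v (c₁ + N) * Qs / qm p N v c₁ with hD_def
  have hD : 0 ≤ D :=
    div_nonneg (mul_nonneg (mul_nonneg hPW.le hjump.le) hQs.le) hqvc₁.le
  have he3 : c₀ * pword p σ = D * Pc ^ K := by
    rw [hc₀_def, hD_def, hpσ]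
    field_simp
  have hmain : ∀ j ∈ Finset.range K,
      τf j ∈ (Gam p N σ).filter (fun τ => τ.getLastD 0 = i + N) ∧
      (τf j).headD 0 = a₀ ∧ c₀ * pword p σ ≤ pword p (τf j) := by
    intro j hj
    rw [Finset.mem_range] at hj
    have hKj : K - j = (K - j - 1) + 1 := by omega
    have ej : crep cb (K - j) ++ S = c₁ :: (cbt ++ (crep cb (K - j - 1) ++ S)) := by
      rw [hKj]
      show (cb ++ crep cb (K - j - 1)) ++ S = _
      rw [hcb_def]
      simp
    have hsplitj : σ = (pre ++ crep cb j) ++ (crep cb (K - j) ++ S) := by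
      rw [hσ_def, show K = j + (K - j) by omega, crep_add]
      simp
    -- lift membership
    have hlift : τf j ∈ lifts N σ := by
      rw [hsplitj]
      exact mem_lifts_of_split (pre ++ crep cb j) (crep cb (K - j) ++ S)
    -- chain
    have hlowchain : (pre ++ crep cb j).Chain' (edge p) := by
      have := chain'_glue hprechain hprelast
        (chain'_v_crep hcblast hchp (List.isChain_singleton v) j)
      simpa using this
    have hlowlast : (pre ++ crep cb j).getLast? = some v := by
      cases j with
      | zero => simpa [crep] using hprelast
      | succ j' =>
          rw [List.getLast?_append_of_ne_nil _ (crep_ne_nil hcbne' (by omega)),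
            getLast?_crep hcbne' j', hcblast]
    have hupchainq : (crep cb (K - j) ++ S).Chain' (edge (qm p N)) :=
      (chain'_v_crep hcblast hchq hvSchainq (K - j)).tail
    have hupchainp : ((crep cb (K - j) ++ S).map (· + N)).Chain' (edge p) :=
      (List.isChain_map _).2 hupchainq
    have e2' : (crep cb (K - j) ++ S).map (· + N)
        = (c₁ + N) :: ((cbt ++ (crep cb (K - j - 1) ++ S)).map (· + N)) := by
      rw [ej]
      simp
    have hvupchain : (v :: (crep cb (K - j) ++ S).map (· + N)).Chain' (edge p) := by
      rw [e2']
      exact List.isChain_cons.2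
        ⟨by intro y hy; simp at hy; rw [← hy]; exact hjump,
         by rw [← e2']; exact hupchainp⟩
    have hchain : (τf j).Chain' (edge p) :=
      chain'_glue hlowchain hlowlast hvupchain
    -- last letter
    have hmapne : (crep cb (K - j) ++ S).map (· + N) ≠ [] := by
      simp only [ne_eq, List.map_eq_nil_iff]
      intro h
      rw [List.append_eq_nil_iff] at h
      exact hSne h.2
    have hlast : (τf j).getLastD 0 = i + N := by
      rw [List.getLastD_eq_getLast?, show τf j = (pre ++ crep cb j) ++
          ((crep cb (K - j) ++ S).map (· + N)) from rfl,
        List.getLast?_append_of_ne_nil _ hmapne, List.getLast?_map,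
        List.getLast?_append_of_ne_nil _ hSne, hSlast]
      rfl
    -- head
    have hhead : (τf j).headD 0 = a₀ := by
      show ((pre ++ crep cb j) ++ _).headD 0 = a₀
      rw [hpre_def]
      rfl
    -- value
    have e5 : pword p (v :: (crep cb (K - j) ++ S).map (· + N))
        = p v (c₁ + N) * pword (qm p N) (crep cb (K - j) ++ S) := by
      conv_lhs => rw [e2']
      rw [pword_cons₂, ← e2', pword_map]
    have hval : pword p (τf j)
        = pword p pre * (Pc ^ j * (p v (c₁ + N) * pword (qm p N) (crep cb (K - j) ++ S))) := by
      have e : τf j = pre' ++ (v :: (crep cb j ++ (crep cb (K - j) ++ S).map (· + N))) := by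
        show (pre ++ crep cb j) ++ _ = _
        rw [hpre']
        simp
      rw [e, pword_split pre' v _, ← hpre', pword_v_crep p hcblast _ j, e5]
    have hqid : qm p N v c₁ * pword (qm p N) (crep cb (K - j) ++ S)
        = Qc ^ (K - j) * Qs := by
      have h := pword_v_crep (qm p N) hcblast S (K - j)
      rw [← h]
      conv_rhs => rw [ej]
      rw [pword_cons₂, ej]
    have hq1 : pword (qm p N) (crep cb (K - j) ++ S)
        = Qc ^ (K - j) * Qs / qm p N v c₁ := by
      rw [eq_div_iff hq0, mul_comm]
      exact hqid
    have he4 : pword p (τf j) = D * (Pc ^ j * Qc ^ (K - j)) := by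
      rw [hval, hq1, hD_def]
      field_simp
    have hkey : Pc ^ K ≤ Pc ^ j * Qc ^ (K - j) := by
      have hpow : Pc ^ K = Pc ^ j * Pc ^ (K - j) := by
        rw [← pow_add]
        congr 1
        omega
      rw [hpow]
      exact mul_le_mul_of_nonneg_left (pow_le_pow_left₀ hPc.le hPQ _)
        (pow_nonneg hPc.le j)
    refine ⟨?_, hhead, ?_⟩
    · simp only [Gam, Finset.mem_filter]
      exact ⟨⟨hlift, hchain⟩, hlast⟩
    · rw [he3, he4]
      exact mul_le_mul_of_nonneg_left hkey hD
  -- injectivity of the jump lifts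
  have hinj : ∀ j₁ ∈ Finset.range K, ∀ j₂ ∈ Finset.range K, τf j₁ = τf j₂ → j₁ = j₂ := by
    have hcnt : ∀ j, (τf j).countP (fun x => decide (x ≤ N)) = m + j * L := by
      intro j
      show ((pre ++ crep cb j) ++ ((crep cb (K - j) ++ S).map (· + N))).countP _ = _
      rw [List.countP_append, List.countP_append]
      have h1 : pre.countP (fun x => decide (x ≤ N)) = m := by
        rw [List.countP_eq_length.2, hprelen']
        intro a ha
        have := Finset.mem_Icc.1 (hpremem a ha)
        simp
        omega
      have h2 : (crep cb j).countP (fun x => decide (x ≤ N)) = j * L := by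
        rw [List.countP_eq_length.2, crep_length]
        intro a ha
        have := Finset.mem_Icc.1 (hcbmem a (crep_mem _ a ha))
        simp
        omega
      have h3 : ((crep cb (K - j) ++ S).map (· + N)).countP (fun x => decide (x ≤ N)) = 0 := by
        rw [List.countP_eq_zero]
        intro a ha
        rw [List.mem_map] at ha
        obtain ⟨x, hx, rfl⟩ := ha
        have : x ∈ Finset.Icc 1 N := by
          rcases List.mem_append.1 hx with hx | hx
          · exact hcbmem x (crep_mem _ x hx)
          · exact hSmem x hx
        have := Finset.mem_Icc.1 this
        simp
        omega
      rw [h1, h2, h3]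
      omega
    intro j₁ _ j₂ _ heq
    have := hcnt j₁
    rw [heq, hcnt j₂] at this
    have : j₁ * L = j₂ * L := by omega
    exact Nat.eq_of_mul_eq_mul_right hL this
  -- I₂ bound
  have hχhead : ∀ τ ∈ (Gam p N σ).filter (fun τ => τ.getLastD 0 = i + N),
      0 ≤ χ (τ.headD 0) * pword p τ := by
    intro τ hτ
    rw [Finset.mem_filter] at hτ
    have hτlift : τ ∈ lifts N σ := by
      have := hτ.1
      simp only [Gam, Finset.mem_filter] at this
      exact this.1
    have hhd := lifts_head hσne hτlift
    rw [hσhead] at hhd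
    have hmem2N : τ.headD 0 ∈ Finset.Icc 1 (2 * N) := by
      have := Finset.mem_Icc.1 ha₀Ψ
      rcases hhd with h | h <;> rw [h] <;> simp only [Finset.mem_Icc] <;> omega
    exact mul_nonneg (hχpos _ hmem2N).le (pword_nonneg hp0 τ)
  have hI2 : (K : ℝ) * (c₀ * (χ a₀ * pword p σ)) ≤ Ipart p χ N (i + N) σ := by
    have hsubT : (Finset.range K).image τf
        ⊆ (Gam p N σ).filter (fun τ => τ.getLastD 0 = i + N) := by
      intro τ hτ
      rw [Finset.mem_image] at hτ
      obtain ⟨j, hj, rfl⟩ := hτ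
      exact (hmain j hj).1
    have hstep1 : ∑ τ ∈ (Finset.range K).image τf, χ (τ.headD 0) * pword p τ
        ≤ Ipart p χ N (i + N) σ :=
      Finset.sum_le_sum_of_subset_of_nonneg hsubT (fun τ hτ _ => hχhead τ hτ)
    rw [Finset.sum_image hinj] at hstep1
    refine le_trans ?_ hstep1
    have hterm : ∀ j ∈ Finset.range K,
        c₀ * (χ a₀ * pword p σ) ≤ χ ((τf j).headD 0) * pword p (τf j) := by
      intro j hj
      obtain ⟨_, hhead, hlow⟩ := hmain j hj
      rw [hhead]
      calc c₀ * (χ a₀ * pword p σ) = χ a₀ * (c₀ * pword p σ) := by ring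
        _ ≤ χ a₀ * pword p (τf j) := mul_le_mul_of_nonneg_left hlow hχa₀.le
    calc (K : ℝ) * (c₀ * (χ a₀ * pword p σ))
        = ∑ _j ∈ Finset.range K, c₀ * (χ a₀ * pword p σ) := by
          rw [Finset.sum_const, Finset.card_range, nsmul_eq_mul]
      _ ≤ ∑ j ∈ Finset.range K, χ ((τf j).headD 0) * pword p (τf j) :=
          Finset.sum_le_sum hterm
  -- conclusion
  have hB : 0 < χ a₀ * pword p σ := mul_pos hχa₀ hσpos
  have hKc : χ (i + N) < (K : ℝ) * (χ i * c₀) := by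
    rw [div_lt_iff₀ (by positivity)] at hK
    linarith [hK]
  refine ⟨σ, hSword, hσlen, hσlast, ?_⟩
  calc Ipart p χ N i σ ≤ χ a₀ * pword p σ := hI1
    _ < χ i / χ (i + N) * ((K : ℝ) * (c₀ * (χ a₀ * pword p σ))) := by
        rw [div_mul_eq_mul_div, lt_div_iff₀ hχiN]
        calc (χ a₀ * pword p σ) * χ (i + N)
            < (χ a₀ * pword p σ) * ((K : ℝ) * (χ i * c₀)) :=
              mul_lt_mul_of_pos_left hKc hB
          _ = χ i * ((K : ℝ) * (c₀ * (χ a₀ * pword p σ))) := by ring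
    _ ≤ χ i / χ (i + N) * Ipart p χ N (i + N) σ :=
        mul_le_mul_of_nonneg_left hI2 (div_pos hχi hχiN).le

end MTM

end
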